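/- arXiv:2101.11558 — 2 statements merged into one kernel-verified Lean document; each statement's English description precedes it below -/
import Mathlib

section
/- Let Φ_w = (G, φ, w) be a positively weighted T-gain graph on a graph G with positive edge weight function w, and let G_w be the underlying positively weighted graph (gain function identically 1). Then the adjacency matrices A(Φ_w) and A(G_w) are cospectral if and only if Φ = (G, φ) is balanced. -/
open Matrix
open scoped Classical

noncomputable section

namespace GG

variable {V : Type*}

/-- The gain of a walk: product of the gains of its oriented edges. -/
def walkGain {G : SimpleGraph V} (φ : V → V → ℂ) {u v : V} (p : G.Walk u v) : ℂ :=
  (p.darts.map (fun d => φ d.toProd.1 d.toProd.2)).prod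

/-- `φ` is a `𝕋`-gain function on `G`: unit modulus on edges, inverse under reversal. -/
def IsGain (G : SimpleGraph V) (φ : V → V → ℂ) : Prop :=
  (∀ i j, G.Adj i j → ‖φ i j‖ = 1) ∧ (∀ i j, G.Adj i j → φ j i = (φ i j)⁻¹)

/-- Adjacency matrix of a gain graph. -/
def gainAdj [Fintype V] [DecidableEq V] (G : SimpleGraph V) (φ : V → V → ℂ) :
    Matrix V V ℂ := fun i j => if G.Adj i j then φ i j else 0

/-- A gain graph is balanced if every cycle has gain 1. -/
def GBalanced (G : SimpleGraph V) (φ : V → V → ℂ) : Prop :=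
  ∀ (u : V) (c : G.Walk u u), c.IsCycle → walkGain φ c = 1

/-- All shortest paths between any pair of vertices have the same gain. -/
def DistCompatible (G : SimpleGraph V) (φ : V → V → ℂ) : Prop :=
  ∀ (s t : V) (p q : G.Walk s t), p.length = G.dist s t → q.length = G.dist s t →
    walkGain φ p = walkGain φ q

/-- The set of gains of shortest `s`-`t` paths. -/
def shortestGains (G : SimpleGraph V) (φ : V → V → ℂ) (s t : V) : Set ℂ :=
  {z | ∃ p : G.Walk s t, p.length = G.dist s t ∧ walkGain φ p = z}

/-- The element of `S` maximizing the real part, ties broken by maximal imaginary part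
(correct for finite nonempty sets of gains). -/
def lexMaxGain (S : Set ℂ) : ℂ :=
  ⟨sSup (Complex.re '' S), sSup (Complex.im '' {z ∈ S | z.re = sSup (Complex.re '' S)})⟩

/-- The element of `S` minimizing the real part, ties broken by minimal imaginary part. -/
def lexMinGain (S : Set ℂ) : ℂ :=
  ⟨sInf (Complex.re '' S), sInf (Complex.im '' {z ∈ S | z.re = sInf (Complex.re '' S)})⟩

/-- The maximum gain distance matrix `D^max_<(Φ)` with respect to a strict order `lt`. -/
def Dmax [Fintype V] [DecidableEq V] (G : SimpleGraph V) (φ : V → V → ℂ)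
    (lt : V → V → Prop) : Matrix V V ℂ := fun s t =>
  if lt s t then lexMaxGain (shortestGains G φ s t) * (G.dist s t : ℂ)
  else if lt t s then (starRingEnd ℂ) (lexMaxGain (shortestGains G φ t s)) * (G.dist s t : ℂ)
  else 0

/-- The minimum gain distance matrix `D^min_<(Φ)` with respect to a strict order `lt`. -/
def Dmin [Fintype V] [DecidableEq V] (G : SimpleGraph V) (φ : V → V → ℂ)
    (lt : V → V → Prop) : Matrix V V ℂ := fun s t =>
  if lt s t then lexMinGain (shortestGains G φ s t) * (G.dist s t : ℂ)
  else if lt t s then (starRingEnd ℂ) (lexMinGain (shortestGains G φ t s)) * (G.dist s t : ℂ)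
  else 0

/-- Vertex order independence: the gain distance matrices agree for the standard order
and its reverse. -/
def OrderIndependent [Fintype V] [DecidableEq V] [LinearOrder V] (G : SimpleGraph V)
    (φ : V → V → ℂ) : Prop :=
  Dmax G φ (· < ·) = Dmax G φ (fun a b => b < a) ∧
  Dmin G φ (· < ·) = Dmin G φ (fun a b => b < a)

/-- The largest (real) eigenvalue of a matrix. -/
def maxEig [Fintype V] [DecidableEq V] (A : Matrix V V ℂ) : ℝ :=
  sSup {r : ℝ | (r : ℂ) ∈ spectrum ℂ A}

/-- The spectral radius of a matrix. -/
def specRad [Fintype V] [DecidableEq V] (A : Matrix V V ℂ) : ℝ :=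
  sSup {r : ℝ | ∃ z ∈ spectrum ℂ A, ‖z‖ = r}

/-- The distance matrix of the underlying graph, as a complex matrix. -/
def distMatrix [Fintype V] [DecidableEq V] (G : SimpleGraph V) : Matrix V V ℂ :=
  fun i j => (G.dist i j : ℂ)

/-- Weighted gain adjacency matrix `A(Φ_w)`. -/
def wGainAdj [Fintype V] [DecidableEq V] (G : SimpleGraph V) (φ : V → V → ℂ)
    (w : V → V → ℝ) : Matrix V V ℂ := fun i j => if G.Adj i j then φ i j * (w i j : ℂ) else 0

/-- Weighted adjacency matrix `A(G_w)` of the underlying weighted graph. -/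
def wAdj [Fintype V] [DecidableEq V] (G : SimpleGraph V) (w : V → V → ℝ) :
    Matrix V V ℂ := fun i j => if G.Adj i j then (w i j : ℂ) else 0



/-! ### Auxiliary lemmas -/

section AuxWalk

open SimpleGraph Walk

lemma walkGain_nil {G : SimpleGraph V} (φ : V → V → ℂ) {u : V} :
    walkGain φ (Walk.nil : G.Walk u u) = 1 := rfl

lemma walkGain_cons {G : SimpleGraph V} (φ : V → V → ℂ) {u v x : V} (h : G.Adj u v)
    (p : G.Walk v x) : walkGain φ (Walk.cons h p) = φ u v * walkGain φ p := by
  simp [walkGain]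

lemma walkGain_append {G : SimpleGraph V} (φ : V → V → ℂ) {u v x : V} (p : G.Walk u v)
    (q : G.Walk v x) : walkGain φ (p.append q) = walkGain φ p * walkGain φ q := by
  simp [walkGain, Walk.darts_append]

lemma walkGain_rotate {G : SimpleGraph V} (φ : V → V → ℂ) {u x : V} (c : G.Walk u u)
    (h : x ∈ c.support) : walkGain φ (c.rotate x h) = walkGain φ c :=
  List.Perm.prod_eq ((Walk.rotate_darts c x h).perm.map _)

lemma abs_one_inv_conj {z : ℂ} (hz : ‖z‖ = 1) : (starRingEnd ℂ) z = z⁻¹ := by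
  have h0 : z ≠ 0 := by intro h; simp [h] at hz
  field_simp
  rw [mul_comm, Complex.mul_conj]
  norm_cast
  rw [Complex.normSq_eq_norm_sq, hz]; norm_num

/-- An edge returning to the far endpoint of a nodup-support path of length ≥ 2
cannot be among its edges. -/
lemma not_mem_edges_of_nodup {G : SimpleGraph V} {u v : V} (h : G.Adj u v)
    (q : G.Walk v u) (hnd : q.support.Nodup) (hlen : 2 ≤ q.length) :
    s(u, v) ∉ q.edges := by
  intro hmem
  cases q with
  | nil => simp at hlen
  | cons h' r =>
    rename_i wv
    rw [Walk.edges_cons, List.mem_cons] at hmem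
    rcases hmem with heq | hmem
    · rw [Sym2.eq_iff] at heq
      have hwu : wv = u := by
        rcases heq with ⟨h1, h2⟩ | ⟨h1, h2⟩
        · exact absurd h1 h.ne
        · exact h1.symm
      subst hwu
      have hr : r.support.Nodup := by
        rw [Walk.support_cons] at hnd; exact hnd.of_cons
      have : r.Nil := by
        cases r with
        | nil => exact Walk.nil_nil
        | cons h'' r' =>
          exfalso
          rw [Walk.support_cons, List.nodup_cons] at hr
          exact hr.1 (Walk.end_mem_support r')
      have : r.length = 0 := Walk.nil_iff_length_eq.1 this
      simp [Walk.length_cons, this] at hlen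
    · have hv : v ∈ r.support := Walk.snd_mem_support_of_mem_edges r hmem
      rw [Walk.support_cons, List.nodup_cons] at hnd
      exact hnd.1 hv

/-- Every closed walk in a balanced gain graph has gain 1. -/
lemma closed_walkGain_eq_one {G : SimpleGraph V} {φ : V → V → ℂ} (hφ : IsGain G φ)
    (hb : GBalanced G φ) : ∀ (n : ℕ) (u : V) (p : G.Walk u u), p.length ≤ n →
    walkGain φ p = 1 := by
  intro n
  induction n with
  | zero =>
    intro u p hp
    cases p with
    | nil => rfl
    | cons h q => simp at hp
  | succ n IH =>
    intro u p hp
    have SPLIT : ∀ (x y : V) (h' : G.Adj x y) (q' : G.Walk y x),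
        (Walk.cons h' q').length ≤ n + 1 →
        ¬ (q'.dropUntil x (q'.end_mem_support)).Nil →
        walkGain φ (Walk.cons h' q') = 1 := by
      intro x y h' q' hlen hnn
      set q1 := q'.takeUntil x q'.end_mem_support with hq1
      set q2 := q'.dropUntil x q'.end_mem_support with hq2
      have hspec : q1.append q2 = q' := q'.take_spec _
      have hlensum : q1.length + q2.length = q'.length := by
        rw [← hspec, Walk.length_append]
      have h2pos : 1 ≤ q2.length := by
        rcases Nat.eq_zero_or_pos q2.length with h | h
        · exact absurd (Walk.nil_iff_length_eq.2 h) hnn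
        · exact h
      have hgain : walkGain φ (Walk.cons h' q') =
          walkGain φ (Walk.cons h' q1) * walkGain φ q2 := by
        conv_lhs => rw [← hspec]
        rw [walkGain_cons, walkGain_append, walkGain_cons, mul_assoc]
      have g1 : (Walk.cons h' q1).length ≤ n := by
        simp only [Walk.length_cons] at hlen ⊢; omega
      have g2 : q2.length ≤ n := by
        simp only [Walk.length_cons] at hlen; omega
      rw [hgain, IH x _ g1, IH x q2 g2, one_mul]
    cases p with
    | nil => rfl
    | cons h q =>
      rename_i v
      by_cases hnn : ¬ (q.dropUntil u (q.end_mem_support)).Nil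
      · exact SPLIT u v h q hp hnn
      push_neg at hnn
      have hcount : q.support.count u = 1 := by
        have h1 : (q.takeUntil u q.end_mem_support).support.count u = 1 :=
          q.count_support_takeUntil_eq_one _
        have hspec : (q.takeUntil u q.end_mem_support).append
            (q.dropUntil u q.end_mem_support) = q := q.take_spec _
        have h2 : (q.dropUntil u q.end_mem_support).support.tail = [] := by
          have := Walk.nil_iff_length_eq.1 hnn
          cases hdp : q.dropUntil u q.end_mem_support with
          | nil => simp [hdp]
          | cons h' r => rw [hdp] at this; simp at this
        calc q.support.count u
            = ((q.takeUntil u q.end_mem_support).support ++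
               (q.dropUntil u q.end_mem_support).support.tail).count u := by
              rw [← Walk.support_append, hspec]
          _ = 1 := by rw [h2, List.append_nil, h1]
      by_cases hnd : q.support.Nodup
      · rcases Nat.lt_or_ge q.length 2 with hsmall | hbig
        · obtain hql | hql : q.length = 0 ∨ q.length = 1 := by omega
          · exfalso
            have : v = u := q.eq_of_length_eq_zero hql
            subst this
            exact G.irrefl h
          · cases q with
            | nil => simp at hql
            | cons h' r =>
              rename_i wv
              have hr : r.length = 0 := by simpa using hql
              have : wv = u := r.eq_of_length_eq_zero hr
              subst this
              have hrnil : r = Walk.nil := by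
                cases r with
                | nil => rfl
                | cons h'' r' => simp at hr
              subst hrnil
              rw [walkGain_cons, walkGain_cons, walkGain_nil, mul_one,
                hφ.2 _ _ h, mul_inv_cancel₀]
              intro h0
              have h1 := hφ.1 _ _ h
              simp [h0] at h1
        · have hcyc : (Walk.cons h q).IsCycle := by
            rw [Walk.cons_isCycle_iff]
            exact ⟨Walk.IsPath.mk' hnd, not_mem_edges_of_nodup h q hnd hbig⟩
          exact hb u (Walk.cons h q) hcyc
      · obtain ⟨x, hx2⟩ : ∃ x, 2 ≤ q.support.count x := by
          by_contra hc
          push_neg at hc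
          exact hnd (List.nodup_iff_count_le_one.2 fun a => by
            have := hc a; omega)
        have hxu : x ≠ u := by
          intro hxe; subst hxe; omega
        have hxmem : x ∈ (Walk.cons h q).support := by
          rw [Walk.support_cons]
          exact List.mem_cons_of_mem _ (List.count_pos_iff.1 (by omega))
        set p' := (Walk.cons h q).rotate x hxmem with hp'
        have hts : ((Walk.cons h q).takeUntil x hxmem).length +
            ((Walk.cons h q).dropUntil x hxmem).length = (Walk.cons h q).length := by
          rw [← Walk.length_append, (Walk.cons h q).take_spec hxmem]
        have hglen : p'.length = (Walk.cons h q).length := by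
          rw [hp']
          simp only [Walk.rotate, Walk.length_append]
          omega
        have hgain : walkGain φ p' = walkGain φ (Walk.cons h q) :=
          walkGain_rotate φ _ hxmem
        have hcnt' : 2 ≤ p'.support.tail.count x := by
          have hperm : List.Perm p'.support.tail (Walk.cons h q).support.tail :=
            (Walk.support_rotate _ x hxmem).perm
          rw [hperm.count_eq]
          rw [Walk.support_cons, List.tail_cons]
          exact hx2
        rw [← hgain]
        cases hpc : p' with
        | nil =>
          exfalso; rw [hpc] at hcnt'; simp at hcnt'
        | cons h' r =>
          rename_i y
          rw [hpc] at hcnt' hglen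
          rw [Walk.support_cons, List.tail_cons] at hcnt'
          apply SPLIT x y h' r (by omega)
          intro hnil
          have h2 : (r.dropUntil x r.end_mem_support).support.tail = [] := by
            have := Walk.nil_iff_length_eq.1 hnil
            cases hdp : r.dropUntil x r.end_mem_support with
            | nil => simp [hdp]
            | cons h'' r' => rw [hdp] at this; simp at this
          have h1 : (r.takeUntil x r.end_mem_support).support.count x = 1 :=
            r.count_support_takeUntil_eq_one _
          have : r.support.count x = 1 := by
            calc r.support.count x
                = ((r.takeUntil x r.end_mem_support).support ++
                   (r.dropUntil x r.end_mem_support).support.tail).count x := by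
                  rw [← Walk.support_append, r.take_spec _]
              _ = 1 := by rw [h2, List.append_nil, h1]
          omega

end AuxWalk

section AuxMatrix

open Polynomial SimpleGraph Walk

/-- charpoly is invariant under conjugation. -/
lemma charpoly_conj [Fintype V] [DecidableEq V] (P M Q : Matrix V V ℂ) (h1 : P * Q = 1) :
    (P * M * Q).charpoly = M.charpoly := by
  have hmap : (P.map (C : ℂ → ℂ[X])) * (Q.map C) = 1 := by
    have := congrArg (fun (N : Matrix V V ℂ) => N.map (C : ℂ → ℂ[X])) h1
    simpa [Matrix.map_mul] using this
  have hchar : charmatrix (P * M * Q) =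
      (P.map (C : ℂ → ℂ[X])) * charmatrix M * (Q.map C) := by
    rw [charmatrix, charmatrix, Matrix.mul_sub, Matrix.sub_mul]
    congr 1
    · rw [mul_assoc, Matrix.scalar_commute X (fun r => Commute.all X r) (Q.map C),
        ← mul_assoc, hmap, one_mul]
    · simp only [RingHom.mapMatrix_apply, Matrix.map_mul]
  rw [Matrix.charpoly, Matrix.charpoly, hchar, Matrix.det_mul, Matrix.det_mul]
  have hdet : (P.map (C : ℂ → ℂ[X])).det * (Q.map C).det = 1 := by
    rw [← Matrix.det_mul, hmap, Matrix.det_one]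
  calc (P.map (C : ℂ → ℂ[X])).det * (charmatrix M).det * (Q.map C).det
      = (P.map (C : ℂ → ℂ[X])).det * (Q.map C).det * (charmatrix M).det := by ring
    _ = (charmatrix M).det := by rw [hdet, one_mul]

lemma charpoly_diagonal [Fintype V] [DecidableEq V] (d : V → ℂ) :
    (Matrix.diagonal d).charpoly = ∏ i, (X - C (d i)) := by
  have : charmatrix (Matrix.diagonal d) = Matrix.diagonal (fun i => X - C (d i)) := by
    refine Matrix.ext fun i j => ?_
    by_cases h : i = j
    · subst h; rw [charmatrix_apply_eq]; simp
    · rw [charmatrix_apply_ne _ _ _ h, Matrix.diagonal_apply_ne _ h,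
        Matrix.diagonal_apply_ne _ h]
      simp
  rw [Matrix.charpoly, this, Matrix.det_diagonal]

/-- The multiset of (complexified) eigenvalues of a Hermitian matrix. -/
def eigMS [Fintype V] [DecidableEq V] {M : Matrix V V ℂ} (hM : M.IsHermitian) : Multiset ℂ :=
  Finset.univ.val.map (fun i => ((hM.eigenvalues i : ℝ) : ℂ))

lemma conj_fact [Fintype V] [DecidableEq V] {M : Matrix V V ℂ} (hM : M.IsHermitian) :
    ∀ k : ℕ, M ^ k = (hM.eigenvectorUnitary : Matrix V V ℂ) *
      (Matrix.diagonal (fun i => ((hM.eigenvalues i : ℝ) : ℂ))) ^ k *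
      (star (hM.eigenvectorUnitary : Matrix V V ℂ)) := by
  have h1 : (hM.eigenvectorUnitary : Matrix V V ℂ) *
      (star (hM.eigenvectorUnitary : Matrix V V ℂ)) = 1 :=
    (Matrix.mem_unitaryGroup_iff).mp (hM.eigenvectorUnitary).2
  have h2 : (star (hM.eigenvectorUnitary : Matrix V V ℂ)) *
      (hM.eigenvectorUnitary : Matrix V V ℂ) = 1 :=
    (Matrix.mem_unitaryGroup_iff').mp (hM.eigenvectorUnitary).2
  have hdiag : (Matrix.diagonal (fun i => ((hM.eigenvalues i : ℝ) : ℂ))) =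
      Matrix.diagonal (RCLike.ofReal ∘ hM.eigenvalues) := rfl
  set U := (hM.eigenvectorUnitary : Matrix V V ℂ) with hU
  set D := Matrix.diagonal (fun i => ((hM.eigenvalues i : ℝ) : ℂ)) with hD
  have hspec : M = U * D * star U := by rw [hM.spectral_theorem, ← hdiag, Unitary.conjStarAlgAut_apply]
  intro k
  induction k with
  | zero => simpa [pow_zero] using h1.symm
  | succ k ih =>
    rw [pow_succ, ih]
    conv_lhs => rw [hspec]
    simp only [Matrix.mul_assoc]
    rw [← Matrix.mul_assoc (star U) U (D * star U), h2, one_mul, pow_succ]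
    simp only [Matrix.mul_assoc]

lemma charpoly_eigMS [Fintype V] [DecidableEq V] {M : Matrix V V ℂ} (hM : M.IsHermitian) :
    M.charpoly = ((eigMS hM).map (fun z => X - C z)).prod := by
  have h1 : (hM.eigenvectorUnitary : Matrix V V ℂ) *
      (star (hM.eigenvectorUnitary : Matrix V V ℂ)) = 1 :=
    (Matrix.mem_unitaryGroup_iff).mp (hM.eigenvectorUnitary).2
  have h := conj_fact hM 1
  rw [pow_one, pow_one] at h
  conv_lhs => rw [h]
  rw [charpoly_conj _ _ _ h1, charpoly_diagonal]
  rw [eigMS, Multiset.map_map]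
  rfl

lemma trace_pow_eigMS [Fintype V] [DecidableEq V] {M : Matrix V V ℂ} (hM : M.IsHermitian)
    (k : ℕ) : (M ^ k).trace = ((eigMS hM).map (· ^ k)).sum := by
  have h2 : (star (hM.eigenvectorUnitary : Matrix V V ℂ)) *
      (hM.eigenvectorUnitary : Matrix V V ℂ) = 1 :=
    (Matrix.mem_unitaryGroup_iff').mp (hM.eigenvectorUnitary).2
  rw [conj_fact hM k, Matrix.trace_mul_cycle, h2, one_mul,
    Matrix.diagonal_pow, Matrix.trace_diagonal]
  rw [eigMS, Multiset.map_map]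
  rfl

lemma multiset_sum_map_finset_sum {α β : Type*} [AddCommMonoid β] (s : Multiset α)
    (r : Finset ℕ) (g : ℕ → α → β) :
    (s.map fun x => ∑ i ∈ r, g i x).sum = ∑ i ∈ r, (s.map (g i)).sum := by
  induction s using Multiset.induction with
  | empty => simp
  | cons a s ih => simp [ih, Finset.sum_add_distrib]

/-- Two multisets of complex numbers with the same power sums are equal. -/
lemma multiset_eq_of_powsum (s t : Multiset ℂ)
    (h : ∀ k : ℕ, (s.map (· ^ k)).sum = (t.map (· ^ k)).sum) : s = t := by
  have hP : ∀ P : ℂ[X], (s.map fun x => P.eval x).sum = (t.map fun x => P.eval x).sum := by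
    intro P
    have he : ∀ x : ℂ, P.eval x = ∑ i ∈ Finset.range (P.natDegree + 1), P.coeff i * x ^ i :=
      fun x => Polynomial.eval_eq_sum_range x
    simp only [he]
    rw [multiset_sum_map_finset_sum, multiset_sum_map_finset_sum]
    refine Finset.sum_congr rfl fun i _ => ?_
    rw [Multiset.sum_map_mul_left, Multiset.sum_map_mul_left, h i]
  ext a
  set F := (s + t).toFinset.erase a with hF
  set P := ∏ b ∈ F, (X - C b) with hPdef
  have heval : ∀ x : ℂ, P.eval x = ∏ b ∈ F, (x - b) := by
    intro x; rw [hPdef, Polynomial.eval_prod]; simp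
  have hzero : ∀ x : ℂ, x ∈ s + t → x ≠ a → P.eval x = 0 := by
    intro x hx hxa
    rw [heval]
    refine Finset.prod_eq_zero (i := x) ?_ (by ring)
    exact Finset.mem_erase.2 ⟨hxa, Multiset.mem_toFinset.2 hx⟩
  have hPa : P.eval a ≠ 0 := by
    rw [heval]
    refine Finset.prod_ne_zero_iff.2 fun b hb => ?_
    have : b ≠ a := (Finset.mem_erase.1 hb).1
    exact sub_ne_zero.2 (Ne.symm this)
  have key : ∀ (m : Multiset ℂ), (∀ x ∈ m, x ∈ s + t) →
      (m.map fun x => P.eval x).sum = (m.count a : ℂ) * P.eval a := by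
    intro m hm
    have hsplit : m.filter (· = a) + m.filter (fun x => ¬ x = a) = m :=
      Multiset.filter_add_not _ m
    conv_lhs => rw [← hsplit]
    rw [Multiset.map_add, Multiset.sum_add]
    have h2 : ((m.filter (fun x => ¬ x = a)).map fun x => P.eval x).sum = 0 := by
      refine Multiset.sum_eq_zero fun y hy => ?_
      obtain ⟨x, hx, rfl⟩ := Multiset.mem_map.1 hy
      have hx' := Multiset.of_mem_filter hx
      exact hzero x (hm x (Multiset.mem_of_mem_filter hx)) hx'
    rw [h2, add_zero]
    have h1 : m.filter (· = a) = Multiset.replicate (m.count a) a :=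
      Multiset.filter_eq' m a
    rw [h1, Multiset.map_replicate, Multiset.sum_replicate, nsmul_eq_mul]
  have hs := key s (fun x hx => Multiset.mem_add.2 (Or.inl hx))
  have ht := key t (fun x hx => Multiset.mem_add.2 (Or.inr hx))
  have hPP := hP P
  rw [hs, ht] at hPP
  have hcnt : (s.count a : ℂ) = (t.count a : ℂ) := mul_right_cancel₀ hPa hPP
  exact_mod_cast hcnt

lemma adjSupported_pow_apply [Fintype V] [DecidableEq V] (G : SimpleGraph V) (c : V → V → ℂ) :
    ∀ (k : ℕ) (u v : V),
    ((Matrix.of fun i j => if G.Adj i j then c i j else 0) ^ k) u v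
      = ∑ p ∈ G.finsetWalkLength k u v, walkGain c p := by
  intro k
  induction k with
  | zero =>
    intro u v
    by_cases h : u = v
    · subst h
      simp [SimpleGraph.finsetWalkLength, Matrix.one_apply, walkGain]
    · simp [SimpleGraph.finsetWalkLength, h, Matrix.one_apply]
  | succ k ih =>
    intro u v
    rw [pow_succ', Matrix.mul_apply]
    have hdisj : ((Finset.univ : Finset (G.neighborSet u)) : Set (G.neighborSet u)).PairwiseDisjoint
        (fun (w : G.neighborSet u) => (G.finsetWalkLength k w v).map
          ⟨fun p => Walk.cons w.property p, fun _ _ h => by cases h; rfl⟩) := by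
      rintro ⟨x, hx⟩ - ⟨y, hy⟩ - hxy
      rw [Function.onFun, Finset.disjoint_left]
      rintro p hp hp'
      simp only [Finset.mem_map, Function.Embedding.coeFn_mk] at hp hp'
      obtain ⟨px, _, rfl⟩ := hp
      obtain ⟨py, hpy, hp⟩ := hp'
      cases hp
      simp at hxy
    have hrhs : ∑ p ∈ G.finsetWalkLength (k + 1) u v, walkGain c p
        = ∑ (w : G.neighborSet u), ∑ p ∈ G.finsetWalkLength k w v,
            walkGain c (Walk.cons w.property p) := by
      rw [show G.finsetWalkLength (k + 1) u v = Finset.univ.biUnion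
        (fun (w : G.neighborSet u) => (G.finsetWalkLength k w v).map
          ⟨fun p => Walk.cons w.property p, fun _ _ h => by cases h; rfl⟩) from rfl]
      rw [Finset.sum_biUnion hdisj]
      exact Finset.sum_congr rfl fun w _ => Finset.sum_map _ _ _
    rw [hrhs]
    have hlhs : ∀ x : V, (Matrix.of fun i j => if G.Adj i j then c i j else 0) u x *
        ((Matrix.of fun i j => if G.Adj i j then c i j else 0) ^ k) x v
        = if G.Adj u x then c u x * ∑ p ∈ G.finsetWalkLength k x v, walkGain c p else 0 := by
      intro x
      by_cases h : G.Adj u x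
      · simp [Matrix.of_apply, h, ih]
      · simp [Matrix.of_apply, h]
    rw [Finset.sum_congr rfl fun x _ => hlhs x]
    rw [← Finset.sum_filter]
    have hset : Finset.univ.filter (fun x => G.Adj u x) = G.neighborFinset u := by
      ext x; simp [SimpleGraph.mem_neighborFinset]
    rw [hset]
    rw [show G.neighborFinset u = (G.neighborSet u).toFinset from rfl]
    rw [← Finset.sum_set_coe (f := fun x => c u x * ∑ p ∈ G.finsetWalkLength k x v, walkGain c p)]
    refine Finset.sum_congr rfl fun w _ => ?_
    rw [Finset.mul_sum]
    exact Finset.sum_congr rfl fun p _ => (walkGain_cons c w.property p).symm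

end AuxMatrix

section AuxHermitian

open SimpleGraph Walk

variable {G : SimpleGraph V} {φ : V → V → ℂ} {w : V → V → ℝ}

lemma isHermitian_wGainAdj [Fintype V] [DecidableEq V] (hφ : IsGain G φ)
    (hsymm : ∀ i j, w i j = w j i) : (wGainAdj G φ w).IsHermitian := by
  refine Matrix.ext fun i j => ?_
  rw [Matrix.conjTranspose_apply]
  by_cases h : G.Adj i j
  · have h' : G.Adj j i := h.symm
    simp only [wGainAdj, if_pos h, if_pos h']
    rw [star_mul']
    have hw : star ((w j i : ℝ) : ℂ) = ((w i j : ℝ) : ℂ) := by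
      rw [hsymm j i]
      exact Complex.conj_ofReal _
    rw [hw]
    congr 1
    rw [hφ.2 i j h, star_inv₀,
      show star (φ i j) = (starRingEnd ℂ) (φ i j) from rfl,
      abs_one_inv_conj (hφ.1 i j h), inv_inv]
  · have h' : ¬ G.Adj j i := fun hh => h hh.symm
    simp [wGainAdj, h, h']

lemma isHermitian_wAdj [Fintype V] [DecidableEq V] (hsymm : ∀ i j, w i j = w j i) :
    (wAdj G w).IsHermitian := by
  refine Matrix.ext fun i j => ?_
  rw [Matrix.conjTranspose_apply]
  by_cases h : G.Adj i j
  · have h' : G.Adj j i := h.symm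
    simp only [wAdj, if_pos h, if_pos h']
    rw [hsymm j i]
    exact Complex.conj_ofReal _
  · have h' : ¬ G.Adj j i := fun hh => h hh.symm
    simp [wAdj, h, h']

/-- The real weight of a walk: product of edge weights. -/
def wProd {G : SimpleGraph V} (w : V → V → ℝ) {u v : V} (p : G.Walk u v) : ℝ :=
  (p.darts.map fun d => w d.toProd.1 d.toProd.2).prod

lemma walkGain_mul {G : SimpleGraph V} (φ ψ : V → V → ℂ) {u v : V} (p : G.Walk u v) :
    walkGain (fun i j => φ i j * ψ i j) p = walkGain φ p * walkGain ψ p := by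
  unfold walkGain
  exact List.prod_map_mul

lemma walkGain_ofReal {G : SimpleGraph V} (w : V → V → ℝ) {u v : V} (p : G.Walk u v) :
    walkGain (fun i j => ((w i j : ℝ) : ℂ)) p = ((wProd w p : ℝ) : ℂ) := by
  unfold walkGain wProd
  rw [show (p.darts.map fun d => ((w d.toProd.1 d.toProd.2 : ℝ) : ℂ))
      = (p.darts.map fun d => w d.toProd.1 d.toProd.2).map Complex.ofRealHom by
    rw [List.map_map]; rfl]
  rw [← map_list_prod]
  rfl

lemma wProd_pos {G : SimpleGraph V} {w : V → V → ℝ} (hpos : ∀ i j, G.Adj i j → 0 < w i j)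
    {u v : V} (p : G.Walk u v) : 0 < wProd w p := by
  refine List.prod_pos fun x hx => ?_
  obtain ⟨d, hd, rfl⟩ := List.mem_map.1 hx
  exact hpos _ _ d.adj

lemma abs_walkGain_eq_one {G : SimpleGraph V} {φ : V → V → ℂ} (hφ : IsGain G φ)
    {u v : V} (p : G.Walk u v) : ‖walkGain φ p‖ = 1 := by
  unfold walkGain
  have : ∀ l : List G.Dart, ‖(l.map fun d => φ d.toProd.1 d.toProd.2).prod‖ = 1 := by
    intro l
    induction l with
    | nil => simp
    | cons d l ih =>
      rw [List.map_cons, List.prod_cons, norm_mul, ih, hφ.1 _ _ d.adj, one_mul]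
  exact this p.darts

lemma eq_one_of_abs_re {z : ℂ} (h1 : ‖z‖ = 1) (h2 : z.re = 1) : z = 1 := by
  have hn : Complex.normSq z = 1 := by
    rw [← Complex.sq_norm, h1]; norm_num
  rw [Complex.normSq_apply, h2] at hn
  have him : z.im = 0 := by nlinarith
  exact Complex.ext (by simp [h2]) (by simp [him])

end AuxHermitian


/-- `A(Φ_w)` and `A(G_w)` are cospectral iff `Φ` is balanced. -/
theorem weighted_cospectral_iff_balanced {V : Type*} [Fintype V] [DecidableEq V]
    (G : SimpleGraph V) (φ : V → V → ℂ) (hφ : IsGain G φ) (w : V → V → ℝ)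
    (hsymm : ∀ i j, w i j = w j i) (hpos : ∀ i j, G.Adj i j → 0 < w i j) :
    (wGainAdj G φ w).charpoly = (wAdj G w).charpoly ↔ GBalanced G φ := by
  classical
  set cA : V → V → ℂ := fun i j => φ i j * ((w i j : ℝ) : ℂ) with hcA
  set cB : V → V → ℂ := fun i j => ((w i j : ℝ) : ℂ) with hcB
  have hAdef : wGainAdj G φ w = Matrix.of (fun i j => if G.Adj i j then cA i j else 0) := rfl
  have hBdef : wAdj G w = Matrix.of (fun i j => if G.Adj i j then cB i j else 0) := rfl
  have hAh : (wGainAdj G φ w).IsHermitian := isHermitian_wGainAdj hφ hsymm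
  have hBh : (wAdj G w).IsHermitian := isHermitian_wAdj hsymm
  have htrA : ∀ k : ℕ, ((wGainAdj G φ w) ^ k).trace
      = ∑ u : V, ∑ p ∈ G.finsetWalkLength k u u, walkGain cA p := by
    intro k
    rw [Matrix.trace]
    refine Finset.sum_congr rfl fun u _ => ?_
    rw [Matrix.diag]
    conv_lhs => rw [hAdef]
    exact adjSupported_pow_apply G cA k u u
  have htrB : ∀ k : ℕ, ((wAdj G w) ^ k).trace
      = ∑ u : V, ∑ p ∈ G.finsetWalkLength k u u, walkGain cB p := by
    intro k
    rw [Matrix.trace]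
    refine Finset.sum_congr rfl fun u _ => ?_
    rw [Matrix.diag]
    conv_lhs => rw [hBdef]
    exact adjSupported_pow_apply G cB k u u
  have hgA : ∀ {a b : V} (p : G.Walk a b),
      walkGain cA p = walkGain φ p * ((wProd w p : ℝ) : ℂ) := by
    intro a b p
    rw [hcA, walkGain_mul, walkGain_ofReal]
  have hgB : ∀ {a b : V} (p : G.Walk a b), walkGain cB p = ((wProd w p : ℝ) : ℂ) := by
    intro a b p
    rw [hcB, walkGain_ofReal]
  constructor
  · -- cospectral → balanced
    intro hchar u c hc
    have hprod : ((eigMS hAh).map (fun z => Polynomial.X - Polynomial.C z)).prod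
        = ((eigMS hBh).map (fun z => Polynomial.X - Polynomial.C z)).prod := by
      rw [← charpoly_eigMS hAh, ← charpoly_eigMS hBh, hchar]
    have hms : eigMS hAh = eigMS hBh := by
      have := congrArg Polynomial.roots hprod
      rwa [Polynomial.roots_multiset_prod_X_sub_C, Polynomial.roots_multiset_prod_X_sub_C] at this
    have htr : ((wGainAdj G φ w) ^ c.length).trace = ((wAdj G w) ^ c.length).trace := by
      rw [trace_pow_eigMS hAh, trace_pow_eigMS hBh, hms]
    rw [htrA, htrB] at htr
    have hre := congrArg Complex.re htr
    rw [Complex.re_sum, Complex.re_sum] at hre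
    rw [Finset.sum_congr rfl (fun u' _ => Complex.re_sum _ _),
      Finset.sum_congr rfl (fun u' _ => Complex.re_sum _ _)] at hre
    have hle2 : ∀ (u' : V) (p : G.Walk u' u'),
        (walkGain cA p).re ≤ (walkGain cB p).re := by
      intro u' p
      rw [hgA p, hgB p]
      have : (walkGain φ p * ((wProd w p : ℝ) : ℂ)).re
          = (walkGain φ p).re * wProd w p := by
        simp [Complex.mul_re]
      rw [this, Complex.ofReal_re]
      have h1 : (walkGain φ p).re ≤ 1 := by
        have := Complex.re_le_norm (walkGain φ p)
        rwa [abs_walkGain_eq_one hφ p] at this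
      exact mul_le_of_le_one_left (wProd_pos hpos p).le h1
    have hle1 : ∀ u' ∈ (Finset.univ : Finset V),
        ∑ p ∈ G.finsetWalkLength c.length u' u', (walkGain cA p).re
        ≤ ∑ p ∈ G.finsetWalkLength c.length u' u', (walkGain cB p).re :=
      fun u' _ => Finset.sum_le_sum fun p _ => hle2 u' p
    have heq1 := (Finset.sum_eq_sum_iff_of_le hle1).1 hre u (Finset.mem_univ u)
    have heq2 := (Finset.sum_eq_sum_iff_of_le fun p _ => hle2 u p).1 heq1 c
      (SimpleGraph.mem_finsetWalkLength_iff.2 rfl)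
    rw [hgA c, hgB c] at heq2
    have hre2 : (walkGain φ c).re * wProd w c = wProd w c := by
      have hmr : (walkGain φ c * ((wProd w c : ℝ) : ℂ)).re
          = (walkGain φ c).re * wProd w c := by
        simp [Complex.mul_re]
      rw [hmr] at heq2
      simpa using heq2
    have hre1 : (walkGain φ c).re = 1 :=
      mul_right_cancel₀ (wProd_pos hpos c).ne' (by rw [hre2, one_mul])
    exact eq_one_of_abs_re (abs_walkGain_eq_one hφ c) hre1
  · -- balanced → cospectral
    intro hbal
    have hclosed : ∀ (u : V) (p : G.Walk u u), walkGain φ p = 1 :=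
      fun u p => closed_walkGain_eq_one hφ hbal p.length u p le_rfl
    have htr : ∀ k : ℕ, ((wGainAdj G φ w) ^ k).trace = ((wAdj G w) ^ k).trace := by
      intro k
      rw [htrA, htrB]
      refine Finset.sum_congr rfl fun u _ => Finset.sum_congr rfl fun p _ => ?_
      rw [hgA p, hclosed u p, one_mul, hgB p]
    have hms : eigMS hAh = eigMS hBh := by
      refine multiset_eq_of_powsum _ _ fun k => ?_
      rw [← trace_pow_eigMS hAh, ← trace_pow_eigMS hBh]
      exact htr k
    rw [charpoly_eigMS hAh, charpoly_eigMS hBh, hms]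


end GG
end
end

section
/- A T-gain graph Φ = (G, φ) on a connected graph fails to be vertex order-independent if and only if there exist vertices v_s, v_t such that either two shortest paths from v_s to v_t in P^max(v_s,v_t) have different gains, or two shortest paths from v_s to v_t in P^min(v_s,v_t) have different gains. -/
open Matrix
open scoped Classical

noncomputable section

namespace GG

variable {V : Type*}

/-! ### Auxiliary lemmas -/

section Aux

variable {G : SimpleGraph V} {φ : V → V → ℂ}

lemma walkGain_reverse (hφ : IsGain G φ) {u v : V} (p : G.Walk u v) :
    walkGain φ p.reverse = (starRingEnd ℂ) (walkGain φ p) := by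
  unfold walkGain
  rw [SimpleGraph.Walk.darts_reverse, List.map_reverse, List.prod_reverse, List.map_map,
    map_list_prod (starRingEnd ℂ), List.map_map]
  refine congrArg List.prod (List.map_congr_left fun d _ => ?_)
  simp only [Function.comp_apply]
  have hadj := d.adj
  have h1 : φ d.toProd.2 d.toProd.1 = (φ d.toProd.1 d.toProd.2)⁻¹ := hφ.2 _ _ hadj
  have h2 : ‖φ d.toProd.1 d.toProd.2‖ = 1 := by
    exact hφ.1 _ _ hadj
  show φ d.symm.toProd.1 d.symm.toProd.2 = (starRingEnd ℂ) (φ d.toProd.1 d.toProd.2)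
  rw [show d.symm.toProd = d.toProd.swap from rfl]
  simpa [h1] using Complex.inv_eq_conj h2

lemma shortestGains_nonempty (hconn : G.Connected) (s t : V) :
    (shortestGains G φ s t).Nonempty := by
  obtain ⟨p, hp⟩ := hconn.exists_walk_length_eq_dist s t
  exact ⟨walkGain φ p, p, hp, rfl⟩

lemma shortestGains_finite [Fintype V] [DecidableEq V] (s t : V) :
    (shortestGains G φ s t).Finite := by
  haveI : DecidableRel G.Adj := Classical.decRel _
  have hsub : shortestGains G φ s t ⊆
      walkGain φ '' {p : G.Walk s t | p.length = G.dist s t} := by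
    rintro z ⟨p, hp, rfl⟩
    exact ⟨p, hp, rfl⟩
  exact Set.Finite.subset (Set.Finite.image _ (Set.toFinite _)) hsub

lemma shortestGains_symm (hφ : IsGain G φ) (s t : V) :
    shortestGains G φ t s = (starRingEnd ℂ) '' shortestGains G φ s t := by
  ext z
  constructor
  · rintro ⟨q, hq, rfl⟩
    refine ⟨walkGain φ q.reverse, ⟨q.reverse, ?_, rfl⟩, ?_⟩
    · rw [SimpleGraph.Walk.length_reverse, SimpleGraph.dist_comm]; exact hq
    · rw [walkGain_reverse hφ, Complex.conj_conj]
  · rintro ⟨w, ⟨p, hp, rfl⟩, rfl⟩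
    refine ⟨p.reverse, ?_, walkGain_reverse hφ p⟩
    rw [SimpleGraph.Walk.length_reverse, SimpleGraph.dist_comm]; exact hp

lemma re_image_conj (S : Set ℂ) :
    Complex.re '' ((starRingEnd ℂ) '' S) = Complex.re '' S := by
  rw [Set.image_image]
  apply Set.image_congr
  intro z _
  exact Complex.conj_re z

lemma argmax_conj (S : Set ℂ) :
    {z ∈ (starRingEnd ℂ) '' S | z.re = sSup (Complex.re '' ((starRingEnd ℂ) '' S))} =
      (starRingEnd ℂ) '' {z ∈ S | z.re = sSup (Complex.re '' S)} := by
  rw [re_image_conj]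
  ext z
  simp only [Set.mem_setOf_eq, Set.mem_image]
  constructor
  · rintro ⟨⟨w, hw, rfl⟩, h⟩
    exact ⟨w, ⟨hw, by simpa using h⟩, rfl⟩
  · rintro ⟨w, ⟨hw, h⟩, rfl⟩
    exact ⟨⟨w, hw, rfl⟩, by simpa using h⟩

lemma argmin_conj (S : Set ℂ) :
    {z ∈ (starRingEnd ℂ) '' S | z.re = sInf (Complex.re '' ((starRingEnd ℂ) '' S))} =
      (starRingEnd ℂ) '' {z ∈ S | z.re = sInf (Complex.re '' S)} := by
  rw [re_image_conj]
  ext z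
  simp only [Set.mem_setOf_eq, Set.mem_image]
  constructor
  · rintro ⟨⟨w, hw, rfl⟩, h⟩
    exact ⟨w, ⟨hw, by simpa using h⟩, rfl⟩
  · rintro ⟨w, ⟨hw, h⟩, rfl⟩
    exact ⟨⟨w, hw, rfl⟩, by simpa using h⟩

lemma im_image_conj (T : Set ℂ) :
    Complex.im '' ((starRingEnd ℂ) '' T) = -(Complex.im '' T) := by
  rw [Set.image_image]
  ext x
  simp only [Set.mem_image, Set.mem_neg]
  constructor
  · rintro ⟨w, hw, rfl⟩
    exact ⟨w, hw, by simp⟩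
  · rintro ⟨w, hw, h⟩
    exact ⟨w, hw, by rw [Complex.conj_im, h, neg_neg]⟩

lemma real_sSup_neg (A : Set ℝ) : sSup (-A) = -sInf A := by
  rw [Real.sInf_def, neg_neg]

lemma real_sInf_neg (A : Set ℝ) : sInf (-A) = -sSup A := by
  rw [Real.sInf_def, neg_neg]

lemma conj_lexMaxGain_conj (S : Set ℂ) :
    (starRingEnd ℂ) (lexMaxGain ((starRingEnd ℂ) '' S)) =
      ⟨sSup (Complex.re '' S),
        sInf (Complex.im '' {z ∈ S | z.re = sSup (Complex.re '' S)})⟩ := by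
  unfold lexMaxGain
  rw [argmax_conj, im_image_conj, real_sSup_neg, re_image_conj]
  apply Complex.ext <;> simp

lemma conj_lexMinGain_conj (S : Set ℂ) :
    (starRingEnd ℂ) (lexMinGain ((starRingEnd ℂ) '' S)) =
      ⟨sInf (Complex.re '' S),
        sSup (Complex.im '' {z ∈ S | z.re = sInf (Complex.re '' S)})⟩ := by
  unfold lexMinGain
  rw [argmin_conj, im_image_conj, real_sInf_neg, re_image_conj]
  apply Complex.ext <;> simp

lemma sup_eq_inf_iff_subsingleton {T : Set ℂ} {c : ℝ} (hfin : T.Finite) (hne : T.Nonempty)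
    (hre : ∀ z ∈ T, z.re = c) :
    sSup (Complex.im '' T) = sInf (Complex.im '' T) ↔ T.Subsingleton := by
  constructor
  · intro h z hz w hw
    have hbdd := (hfin.image Complex.im).bddAbove
    have hbdd' := (hfin.image Complex.im).bddBelow
    have h1 : z.im ≤ sSup (Complex.im '' T) := le_csSup hbdd ⟨z, hz, rfl⟩
    have h2 : sInf (Complex.im '' T) ≤ z.im := csInf_le hbdd' ⟨z, hz, rfl⟩
    have h3 : w.im ≤ sSup (Complex.im '' T) := le_csSup hbdd ⟨w, hw, rfl⟩
    have h4 : sInf (Complex.im '' T) ≤ w.im := csInf_le hbdd' ⟨w, hw, rfl⟩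
    have him : z.im = w.im := by linarith
    exact Complex.ext (by rw [hre z hz, hre w hw]) him
  · intro h
    obtain ⟨z, hz⟩ := hne
    rw [h.eq_singleton_of_mem hz, Set.image_singleton, csSup_singleton, csInf_singleton]

variable [Fintype V] [DecidableEq V]

lemma max_eq_iff (hconn : G.Connected) (hφ : IsGain G φ) (s t : V) :
    lexMaxGain (shortestGains G φ s t) =
      (starRingEnd ℂ) (lexMaxGain (shortestGains G φ t s)) ↔
      {z ∈ shortestGains G φ s t |
        z.re = sSup (Complex.re '' shortestGains G φ s t)}.Subsingleton := by
  have hSfin : (shortestGains G φ s t).Finite := shortestGains_finite s t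
  have hSne : (shortestGains G φ s t).Nonempty := shortestGains_nonempty hconn s t
  rw [shortestGains_symm hφ s t, conj_lexMaxGain_conj]
  set S := shortestGains G φ s t with hSdef
  set M := sSup (Complex.re '' S) with hMdef
  set T := {z ∈ S | z.re = M} with hTdef
  have hTne : T.Nonempty := by
    obtain ⟨z, hz, hzre⟩ := Set.Nonempty.csSup_mem (hSne.image Complex.re)
      (hSfin.image Complex.re)
    exact ⟨z, hz, hzre⟩
  have hTfin : T.Finite := hSfin.subset fun z hz => hz.1
  have hlhs : lexMaxGain S = (⟨M, sSup (Complex.im '' T)⟩ : ℂ) := rfl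
  have hmk : ((⟨M, sSup (Complex.im '' T)⟩ : ℂ) = ⟨M, sInf (Complex.im '' T)⟩) ↔
      sSup (Complex.im '' T) = sInf (Complex.im '' T) :=
    ⟨fun h => congrArg Complex.im h, fun h => by rw [h]⟩
  rw [hlhs, hmk]
  exact sup_eq_inf_iff_subsingleton hTfin hTne fun z hz => hz.2

lemma min_eq_iff (hconn : G.Connected) (hφ : IsGain G φ) (s t : V) :
    lexMinGain (shortestGains G φ s t) =
      (starRingEnd ℂ) (lexMinGain (shortestGains G φ t s)) ↔
      {z ∈ shortestGains G φ s t |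
        z.re = sInf (Complex.re '' shortestGains G φ s t)}.Subsingleton := by
  have hSfin : (shortestGains G φ s t).Finite := shortestGains_finite s t
  have hSne : (shortestGains G φ s t).Nonempty := shortestGains_nonempty hconn s t
  rw [shortestGains_symm hφ s t, conj_lexMinGain_conj]
  set S := shortestGains G φ s t with hSdef
  set m := sInf (Complex.re '' S) with hmdef
  set T := {z ∈ S | z.re = m} with hTdef
  have hTne : T.Nonempty := by
    obtain ⟨z, hz, hzre⟩ := Set.Nonempty.csInf_mem (hSne.image Complex.re)
      (hSfin.image Complex.re)
    exact ⟨z, hz, hzre⟩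
  have hTfin : T.Finite := hSfin.subset fun z hz => hz.1
  have hlhs : lexMinGain S = (⟨m, sInf (Complex.im '' T)⟩ : ℂ) := rfl
  have hmk : ((⟨m, sInf (Complex.im '' T)⟩ : ℂ) = ⟨m, sSup (Complex.im '' T)⟩) ↔
      sSup (Complex.im '' T) = sInf (Complex.im '' T) :=
    ⟨fun h => (congrArg Complex.im h).symm, fun h => by rw [← h]⟩
  rw [hlhs, hmk]
  exact sup_eq_inf_iff_subsingleton hTfin hTne fun z hz => hz.2

end Aux

/-- a gain graph fails to be order independent iff some pair of vertices admits
two shortest paths in `P^max` (or in `P^min`) with different gains. -/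
theorem not_orderIndependent_iff {V : Type*} [Fintype V] [DecidableEq V] [LinearOrder V]
    (G : SimpleGraph V) (hconn : G.Connected) (φ : V → V → ℂ) (hφ : IsGain G φ) :
    ¬ OrderIndependent G φ ↔ ∃ s t : V,
      (∃ p q : G.Walk s t, p.length = G.dist s t ∧ q.length = G.dist s t ∧
        (walkGain φ p).re = sSup (Complex.re '' shortestGains G φ s t) ∧
        (walkGain φ q).re = sSup (Complex.re '' shortestGains G φ s t) ∧
        walkGain φ p ≠ walkGain φ q) ∨
      (∃ p q : G.Walk s t, p.length = G.dist s t ∧ q.length = G.dist s t ∧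
        (walkGain φ p).re = sInf (Complex.re '' shortestGains G φ s t) ∧
        (walkGain φ q).re = sInf (Complex.re '' shortestGains G φ s t) ∧
        walkGain φ p ≠ walkGain φ q) := by
  constructor
  · intro hOI
    by_contra hcon
    apply hOI
    have hmax : ∀ s t : V,
        lexMaxGain (shortestGains G φ s t) =
          (starRingEnd ℂ) (lexMaxGain (shortestGains G φ t s)) := by
      intro s t
      rw [max_eq_iff hconn hφ s t]
      rintro z ⟨⟨p, hp, hpz⟩, hz⟩ w ⟨⟨q, hq, hqz⟩, hw⟩
      by_contra hzw
      exact hcon ⟨s, t, Or.inl ⟨p, q, hp, hq, by rw [hpz]; exact hz, by rw [hqz]; exact hw,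
        by rw [hpz, hqz]; exact hzw⟩⟩
    have hmin : ∀ s t : V,
        lexMinGain (shortestGains G φ s t) =
          (starRingEnd ℂ) (lexMinGain (shortestGains G φ t s)) := by
      intro s t
      rw [min_eq_iff hconn hφ s t]
      rintro z ⟨⟨p, hp, hpz⟩, hz⟩ w ⟨⟨q, hq, hqz⟩, hw⟩
      by_contra hzw
      exact hcon ⟨s, t, Or.inr ⟨p, q, hp, hq, by rw [hpz]; exact hz, by rw [hqz]; exact hw,
        by rw [hpz, hqz]; exact hzw⟩⟩
    constructor
    · funext s t
      rcases lt_trichotomy s t with h | h | h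
      · simp only [Dmax, if_pos h, if_neg (asymm h)]
        rw [hmax s t]
      · subst h; simp [Dmax]
      · simp only [Dmax, if_neg (asymm h), if_pos h]
        rw [hmax s t]
    · funext s t
      rcases lt_trichotomy s t with h | h | h
      · simp only [Dmin, if_pos h, if_neg (asymm h)]
        rw [hmin s t]
      · subst h; simp [Dmin]
      · simp only [Dmin, if_neg (asymm h), if_pos h]
        rw [hmin s t]
  · rintro ⟨s, t, hcase⟩ hOI
    have hst : s ≠ t := by
      rintro rfl
      rcases hcase with ⟨p, q, hp, hq, _, _, hne⟩ | ⟨p, q, hp, hq, _, _, hne⟩ <;>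
      · rw [SimpleGraph.dist_self] at hp hq
        rw [SimpleGraph.Walk.length_eq_zero_iff] at hp hq
        exact hne (by rw [hp.eq_nil, hq.eq_nil])
    have hd : (G.dist s t : ℂ) ≠ 0 :=
      Nat.cast_ne_zero.mpr (Nat.pos_iff_ne_zero.mp (hconn.pos_dist_of_ne hst))
    rcases hcase with ⟨p, q, hp, hq, hpre, hqre, hne⟩ | ⟨p, q, hp, hq, hpre, hqre, hne⟩
    · have hmaxeq : lexMaxGain (shortestGains G φ s t) =
          (starRingEnd ℂ) (lexMaxGain (shortestGains G φ t s)) := by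
        rcases lt_or_gt_of_ne hst with h | h
        · have heq := congrFun (congrFun hOI.1 s) t
          simp only [Dmax, if_pos h, if_neg (asymm h)] at heq
          exact mul_right_cancel₀ hd heq
        · have heq := congrFun (congrFun hOI.1 s) t
          simp only [Dmax, if_neg (asymm h), if_pos h] at heq
          exact (mul_right_cancel₀ hd heq).symm
      have hsub := (max_eq_iff hconn hφ s t).mp hmaxeq
      exact hne (hsub ⟨⟨p, hp, rfl⟩, hpre⟩ ⟨⟨q, hq, rfl⟩, hqre⟩)
    · have hmineq : lexMinGain (shortestGains G φ s t) =
          (starRingEnd ℂ) (lexMinGain (shortestGains G φ t s)) := by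
        rcases lt_or_gt_of_ne hst with h | h
        · have heq := congrFun (congrFun hOI.2 s) t
          simp only [Dmin, if_pos h, if_neg (asymm h)] at heq
          exact mul_right_cancel₀ hd heq
        · have heq := congrFun (congrFun hOI.2 s) t
          simp only [Dmin, if_neg (asymm h), if_pos h] at heq
          exact (mul_right_cancel₀ hd heq).symm
      have hsub := (min_eq_iff hconn hφ s t).mp hmineq
      exact hne (hsub ⟨⟨p, hp, rfl⟩, hpre⟩ ⟨⟨q, hq, rfl⟩, hqre⟩)

end GG
end
end
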